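/- arXiv:1309.1258 — 4 statements merged into one kernel-verified Lean document; each statement's English description precedes it below -/
import Mathlib

section
/- Let C be a cartesian closed category, let R be an object of C, and let F, G be endofunctors of C. Suppose there is a natural isomorphism (in the object variable α, contravariantly) between the internal hom (G α ⟹ R) and F (α ⟹ R), i.e. an isomorphism of functors Cᵒᵖ ⥤ C between α ↦ (G.obj α ⟹ R) and α ↦ F.obj (α ⟹ R). If (A, a : G.obj A ⟶ A) is an initial G-algebra (an initial object of the category of G-algebras), then the object A ⟹ R, equipped with the coalgebra structure map (A ⟹ R) ⟶ (G.obj A ⟹ R) ≅ F.obj (A ⟹ R) given by internal precomposition with a followed by the natural isomorphism at A, is a terminal F-coalgebra (a terminal object of the category of F-coalgebras). -/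
open CategoryTheory CategoryTheory.Limits Opposite

namespace InitAlgTermCoalg

open MonoidalClosed MonoidalCategory

local notation:20 A " ⟹ " B:19 => Functor.obj (ihom A) B

variable {C : Type*} [Category C] [CartesianMonoidalCategory C] [MonoidalClosed C] [BraidedCategory C] {R : C}

/-- `α ↦ (α ⟹ R)` with reducible object and morphism parts. -/
abbrev Hf (R : C) : Cᵒᵖ ⥤ C where
  obj X := (ihom X.unop).obj R
  map f := (pre f.unop).app R

/-- The symmetric transpose `(X ⟶ A ⟹ R) → (A ⟶ X ⟹ R)`. -/
noncomputable def t {X A : C} (f : X ⟶ A ⟹ R) : A ⟶ X ⟹ R :=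
  MonoidalClosed.curry ((β_ X A).hom ≫ MonoidalClosed.uncurry f)

lemma t_t {X A : C} (f : X ⟶ A ⟹ R) : t (t f) = f := by
  apply MonoidalClosed.uncurry_injective
  rw [t, t, MonoidalClosed.uncurry_curry, MonoidalClosed.uncurry_curry,
    ← Category.assoc, SymmetricCategory.symmetry, Category.id_comp]

lemma t_injective {X A : C} {f g : X ⟶ A ⟹ R} (h : t f = t g) : f = g := by
  rw [← t_t (R := R) f, h, t_t]

/-- Right naturality: `u ≫ t f = t (f ≫ pre u)`. -/
lemma t_natural_right {X A B : C} (f : X ⟶ A ⟹ R) (u : B ⟶ A) :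
    u ≫ t f = t (f ≫ (pre u).app R) := by
  apply MonoidalClosed.uncurry_injective
  have h1 : MonoidalClosed.uncurry (u ≫ t f)
      = X ◁ u ≫ (β_ X A).hom ≫ MonoidalClosed.uncurry f := by
    rw [MonoidalClosed.uncurry_natural_left, t, MonoidalClosed.uncurry_curry]
  have h2 : MonoidalClosed.uncurry (t (f ≫ (pre u).app R))
      = (β_ X B).hom ≫ B ◁ f ≫ MonoidalClosed.uncurry ((pre u).app R) := by
    rw [t, MonoidalClosed.uncurry_curry, MonoidalClosed.uncurry_natural_left]
  rw [h1, h2, uncurry_pre, MonoidalClosed.uncurry_eq,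
    BraidedCategory.braiding_naturality_right_assoc, ← whisker_exchange_assoc]

/-- Left naturality: `t (w ≫ f) = t f ≫ pre w`. -/
lemma t_natural_left {X X' A : C} (f : X ⟶ A ⟹ R) (w : X' ⟶ X) :
    t (w ≫ f) = t f ≫ (pre w).app R := by
  apply MonoidalClosed.uncurry_injective
  have h1 : MonoidalClosed.uncurry (t (w ≫ f))
      = (β_ X' A).hom ≫ A ◁ w ≫ MonoidalClosed.uncurry f := by
    rw [t, MonoidalClosed.uncurry_curry, MonoidalClosed.uncurry_natural_left]
  have h2 : MonoidalClosed.uncurry (t f ≫ (pre w).app R)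
      = X' ◁ t f ≫ MonoidalClosed.uncurry ((pre w).app R) := by
    rw [MonoidalClosed.uncurry_natural_left]
  have h3 : MonoidalClosed.uncurry (t f) = (β_ X A).hom ≫ MonoidalClosed.uncurry f := by
    rw [t, MonoidalClosed.uncurry_curry]
  rw [h1, h2, uncurry_pre, whisker_exchange_assoc, ← MonoidalClosed.uncurry_eq, h3,
    ← BraidedCategory.braiding_naturality_left_assoc]

end InitAlgTermCoalg

local notation:20 A " ⟹ " B:19 => Functor.obj (CategoryTheory.ihom A) B

open InitAlgTermCoalg MonoidalClosed in
/-- If `(G α ⟹ R)` is naturally isomorphic to `F (α ⟹ R)` (contravariantly in `α`),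
then the internal hom `A ⟹ R` out of the carrier of an initial `G`-algebra `(A, a)`,
with structure map given by internal precomposition with `a` followed by the natural
isomorphism, is a terminal `F`-coalgebra. -/
theorem initial_algebra_internalHom_terminal_coalgebra
    {C : Type*} [Category C] [CartesianMonoidalCategory C] [MonoidalClosed C]
    (R : C) (F G : C ⥤ C)
    (η : G.op ⋙ CategoryTheory.MonoidalClosed.internalHom.flip.obj R ≅
         CategoryTheory.MonoidalClosed.internalHom.flip.obj R ⋙ F)
    (A : C) (a : G.obj A ⟶ A)
    (hA : Nonempty (IsInitial (Endofunctor.Algebra.mk A a : Endofunctor.Algebra G))) :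
    Nonempty (IsTerminal
      (Endofunctor.Coalgebra.mk ((CategoryTheory.MonoidalClosed.internalHom.flip.obj R).obj (op A))
        ((CategoryTheory.MonoidalClosed.internalHom.flip.obj R).map a.op ≫ η.hom.app (op A)) :
        Endofunctor.Coalgebra F)) := by
  revert η
  change ∀ η : G.op ⋙ InitAlgTermCoalg.Hf R ≅ InitAlgTermCoalg.Hf R ⋙ F,
    Nonempty (IsTerminal (Endofunctor.Coalgebra.mk ((InitAlgTermCoalg.Hf R).obj (op A))
      ((InitAlgTermCoalg.Hf R).map a.op ≫ η.hom.app (op A)) : Endofunctor.Coalgebra F))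
  intro η
  obtain ⟨hI⟩ := hA
  classical
  letI : BraidedCategory C := BraidedCategory.ofCartesianMonoidalCategory
  -- cancellation facts for the components of η at `op A`
  have hinv : ∀ {X : C} (h : X ⟶ G.obj A ⟹ R),
      (h ≫ η.hom.app (op A)) ≫ η.inv.app (op A) = h := by
    intro X h
    calc (h ≫ η.hom.app (op A)) ≫ η.inv.app (op A)
        = h ≫ (η.hom.app (op A) ≫ η.inv.app (op A)) := by rw [Category.assoc]
      _ = h := by rw [Iso.hom_inv_id_app]; exact Category.comp_id h
  have hhom : ∀ {X : C} (h : X ⟶ F.obj (A ⟹ R)),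
      (h ≫ η.inv.app (op A)) ≫ η.hom.app (op A) = h := by
    intro X h
    calc (h ≫ η.inv.app (op A)) ≫ η.hom.app (op A)
        = h ≫ (η.inv.app (op A) ≫ η.hom.app (op A)) := by rw [Category.assoc]
      _ = h := by rw [Iso.inv_hom_id_app]; exact Category.comp_id h
  -- key computation: the transpose of the coalgebra condition is an algebra condition
  have key : ∀ (X : C) (x : X ⟶ F.obj X) (g : A ⟶ X ⟹ R),
      G.map g ≫ t (x ≫ F.map (t (𝟙 (X ⟹ R))) ≫ η.inv.app (op (X ⟹ R)))
        = t (x ≫ F.map (t g) ≫ η.inv.app (op A)) := by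
    intro X x g
    have nat : η.inv.app (op (X ⟹ R)) ≫ (pre (G.map g)).app R
        = F.map ((pre g).app R) ≫ η.inv.app (op A) :=
      ((η.inv.naturality g.op).symm : _)
    have hδ : t (𝟙 (X ⟹ R)) ≫ (pre g).app R = t g := by
      have h := t_natural_left (R := R) (𝟙 (X ⟹ R)) g
      rw [Category.comp_id] at h
      exact h.symm
    rw [t_natural_right]
    congr 1
    simp only [Category.assoc]
    rw [nat, ← F.map_comp_assoc, hδ]
  -- the correspondence of hom conditions
  have cond : ∀ (X : C) (x : X ⟶ F.obj X) (f : X ⟶ A ⟹ R),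
      (x ≫ F.map f = f ≫ ((pre a).app R ≫ η.hom.app (op A)))
        ↔ G.map (t f) ≫ t (x ≫ F.map (t (𝟙 (X ⟹ R))) ≫ η.inv.app (op (X ⟹ R)))
            = a ≫ t f := by
    intro X x f
    rw [key X x (t f), t_t, t_natural_right]
    constructor
    · intro h
      congr 1
      calc x ≫ F.map f ≫ η.inv.app (op A)
          = (x ≫ F.map f) ≫ η.inv.app (op A) := by rw [Category.assoc]
        _ = ((f ≫ (pre a).app R) ≫ η.hom.app (op A)) ≫ η.inv.app (op A) := by
            rw [h]; simp only [Category.assoc]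
        _ = f ≫ (pre a).app R := hinv _
    · intro h
      have h2 : x ≫ F.map f ≫ η.inv.app (op A) = f ≫ (pre a).app R := t_injective h
      calc x ≫ F.map f
          = ((x ≫ F.map f) ≫ η.inv.app (op A)) ≫ η.hom.app (op A) := (hhom _).symm
        _ = (x ≫ F.map f ≫ η.inv.app (op A)) ≫ η.hom.app (op A) := by
            simp only [Category.assoc]
        _ = (f ≫ (pre a).app R) ≫ η.hom.app (op A) := by rw [h2]
        _ = f ≫ ((pre a).app R ≫ η.hom.app (op A)) := by rw [Category.assoc]
  have main : ∀ V : Endofunctor.Coalgebra F, ∃! f : V.1 ⟶ A ⟹ R,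
      V.str ≫ F.map f = f ≫ ((pre a).app R ≫ η.hom.app (op A)) := by
    intro V
    set B : Endofunctor.Algebra G := ⟨V.1 ⟹ R,
      t (V.str ≫ F.map (t (𝟙 (V.1 ⟹ R))) ≫ η.inv.app (op (V.1 ⟹ R)))⟩ with hB
    refine ⟨t (hI.to B).f, ?_, ?_⟩
    · refine (cond V.1 V.str _).2 ?_
      rw [t_t]
      exact (hI.to B).h
    · intro f hf
      have hAlg : (⟨t f, (cond V.1 V.str f).1 hf⟩ :
          (Endofunctor.Algebra.mk A a : Endofunctor.Algebra G) ⟶ B) = hI.to B :=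
        hI.hom_ext _ _
      have hff : t f = (hI.to B).f := congrArg Endofunctor.Algebra.Hom.f hAlg
      calc f = t (t f) := (t_t f).symm
        _ = t (hI.to B).f := by rw [hff]
  refine ⟨IsTerminal.ofUniqueHom (fun V => ⟨(main V).choose, (main V).choose_spec.1⟩)
    (fun V m => ?_)⟩
  apply Endofunctor.Coalgebra.ext
  exact (main V).choose_spec.2 m.f m.h
end

section
/- Let R be a type, and let F, G be endofunctors of the category of types (Type u). Suppose given, for every type X, an equivalence e X : (G.obj X → R) ≃ F.obj (X → R) that is natural in X contravariantly, meaning: for all types X, Y, every function f : X → Y, and every h : G.obj Y → R, one has e X (h ∘ G.map f) = F.map (fun k => k ∘ f) (e Y h). If (A, a : G.obj A → A) is an initial G-algebra, then the type A → R, equipped with the coalgebra structure map sending h : A → R to e A (h ∘ a) : F.obj (A → R), is a terminal F-coalgebra. -/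
open CategoryTheory CategoryTheory.Limits

universe u

/-- Auxiliary: the `G`-algebra on `V.1 → R` obtained by transposing an `F`-coalgebra. -/
def arrowAlgAux (R : Type u) {F : Type u ⥤ Type u} (G : Type u ⥤ Type u)
    (e : ∀ X : Type u, (G.obj X → R) ≃ F.obj (X → R))
    (V : Endofunctor.Coalgebra F) : Endofunctor.Algebra G where
  a := V.1 → R
  str := TypeCat.ofHom fun t x0 =>
    (e (V.1 → R)).symm (F.map (TypeCat.ofHom fun x1 (k : V.1 → R) => k x1) (V.str x0)) t

/-- Type-level version: if `(G X → R) ≃ F (X → R)` naturally (contravariantly) in `X`,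
then `A → R` for an initial `G`-algebra `(A, a)`, with structure map `h ↦ e A (h ∘ a)`,
is a terminal `F`-coalgebra. -/
theorem initial_algebra_arrow_terminal_coalgebra_type
    (R : Type u) (F G : Type u ⥤ Type u)
    (e : ∀ X : Type u, (G.obj X → R) ≃ F.obj (X → R))
    (nat : ∀ (X Y : Type u) (f : X → Y) (h : G.obj Y → R),
      e X (h ∘ G.map (TypeCat.ofHom f)) = F.map (TypeCat.ofHom (fun k : Y → R => k ∘ f)) (e Y h))
    (A : Type u) (a : G.obj A → A)
    (hA : Nonempty (IsInitial (Endofunctor.Algebra.mk A (TypeCat.ofHom a) : Endofunctor.Algebra G))) :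
    Nonempty (IsTerminal
      (Endofunctor.Coalgebra.mk (A → R) (TypeCat.ofHom (fun h => e A (h ∘ a))) :
        Endofunctor.Coalgebra F)) := by
  obtain ⟨init⟩ := hA
  -- the key equivalence between the coalgebra-morphism condition and the
  -- algebra-morphism condition, through transposition
  have key : ∀ (V : Endofunctor.Coalgebra F) (g : A → (V.1 → R)),
      (V.str ≫ F.map (TypeCat.ofHom fun x0 a0 => g a0 x0) =
        TypeCat.ofHom (fun x0 a0 => g a0 x0) ≫ TypeCat.ofHom (fun h : A → R => e A (h ∘ a))) ↔
      (G.map (TypeCat.ofHom g) ≫ (arrowAlgAux R G e V).str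
        = (Endofunctor.Algebra.mk A (TypeCat.ofHom a)).str ≫ TypeCat.ofHom g) := by
    intro V g
    have hnat : ∀ x0 : V.1,
        e A ((e (V.1 → R)).symm (F.map (TypeCat.ofHom fun x1 (k : V.1 → R) => k x1) (V.str x0))
            ∘ G.map (TypeCat.ofHom g))
          = F.map (TypeCat.ofHom fun x0 a0 => g a0 x0) (V.str x0) := by
      intro x0
      rw [nat A (V.1 → R) g, Equiv.apply_symm_apply, ← FunctorToTypes.map_comp_apply]
      rfl
    constructor
    · intro hc
      ext t
      funext x0
      have hx : F.map (TypeCat.ofHom fun x0 a0 => g a0 x0) (V.str x0)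
          = e A (fun t0 => g (a t0) x0) := types_congr_hom hc x0
      have h2 : (fun t0 => g (a t0) x0) =
          ((e (V.1 → R)).symm (F.map (TypeCat.ofHom fun x1 (k : V.1 → R) => k x1) (V.str x0)))
            ∘ G.map (TypeCat.ofHom g) :=
        (e A).injective (by rw [hnat x0, hx])
      exact (congrFun h2 t).symm
    · intro halg
      ext x0
      show F.map (TypeCat.ofHom fun x0 a0 => g a0 x0) (V.str x0) = e A (fun t0 => g (a t0) x0)
      rw [← hnat x0]
      congr 1
      funext t0
      have h3 := congrFun (types_congr_hom halg t0) x0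
      simp only [types_comp_apply] at h3
      exact h3
  refine ⟨IsTerminal.ofUniqueHom (fun V =>
    { f := TypeCat.ofHom fun x0 a0 => (init.to (arrowAlgAux R G e V)).f a0 x0
      h := (key V _).2 (init.to (arrowAlgAux R G e V)).h }) ?_⟩
  intro V m
  ext1
  have hm := (key V (fun a0 x0 => m.f x0 a0)).1 m.h
  have heq : (Endofunctor.Algebra.Hom.mk (TypeCat.ofHom fun a0 x0 => m.f x0 a0) hm :
      Endofunctor.Algebra.mk A (TypeCat.ofHom a) ⟶ arrowAlgAux R G e V)
        = init.to (arrowAlgAux R G e V) := init.hom_ext _ _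
  have hf := congrArg Endofunctor.Algebra.Hom.f heq
  ext x0 a0
  exact congrFun (types_congr_hom hf a0) x0
end

section
/- Let B and R be types and let F be the endofunctor of the category of types given on objects by F.obj Y = R × (B → Y) and on morphisms by F.map f = Prod.map id (fun k => f ∘ k). Then the type List B → R, equipped with the coalgebra structure map sending h : List B → R to (h [], fun (b : B) => fun (l : List B) => h (b :: l)) : R × (B → (List B → R)), is a terminal F-coalgebra. -/
open CategoryTheory CategoryTheory.Limits

universe u

/-- The endofunctor `Y ↦ R × (B → Y)` of the category of types. -/
def listDualFunctor (B R : Type u) : Type u ⥤ Type u where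
  obj Y := R × (B → Y)
  map f := TypeCat.ofHom (Prod.map id (fun k => f ∘ k))

/-- The canonical map from a coalgebra into `List B → R`. -/
def listDualRun {B R : Type u} (V : Endofunctor.Coalgebra (listDualFunctor B R))
    (v : V.V) : List B → R
  | [] => (V.str v).1
  | b :: l => listDualRun V ((V.str v).2 b) l

theorem listDualRun_unique {B R : Type u}
    (V : Endofunctor.Coalgebra (listDualFunctor B R))
    (f : V.V → (List B → R))
    (hf : ∀ v, (f v [], fun (b : B) (l : List B) => f v (b :: l))
        = Prod.map id (fun k => f ∘ k) (V.str v)) :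
    f = listDualRun V := by
  funext v l
  induction l generalizing v with
  | nil =>
      have := congrArg Prod.fst (hf v)
      rw [listDualRun]
      exact this.trans (Prod.map_fst _ _ _)
  | cons b l ih =>
      have h2 := congrFun (congrFun (congrArg Prod.snd (hf v)) b) l
      cases hs : V.str v with
      | mk r k =>
        rw [hs] at h2
        simp only [Prod.map, Function.comp] at h2
        rw [h2, listDualRun]
        rw [hs]
        exact ih _

theorem listDualRun_comm {B R : Type u}
    (V : Endofunctor.Coalgebra (listDualFunctor B R)) (v : V.V) :
    ((listDualRun V v [], fun (b : B) (l : List B) => listDualRun V v (b :: l))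
      : R × (B → (List B → R)))
      = Prod.map id (fun k => listDualRun V ∘ k) (V.str v) := by
  cases h : V.str v with
  | mk r k => simp [listDualRun, Prod.map, h]; rfl

/-- The type `List B → R`, with structure map
`h ↦ (h [], fun b l => h (b :: l))`, is a terminal coalgebra for the functor
`Y ↦ R × (B → Y)`. -/
theorem isTerminal_list_arrow_coalgebra (B R : Type u) :
    Nonempty (IsTerminal
      (Endofunctor.Coalgebra.mk (List B → R)
        (TypeCat.ofHom fun h => (h [], fun (b : B) => fun (l : List B) => h (b :: l))) :
        Endofunctor.Coalgebra (listDualFunctor B R))) := by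
  constructor
  refine IsTerminal.ofUniqueHom
    (fun V => Endofunctor.Coalgebra.Hom.mk (TypeCat.ofHom (listDualRun V)) ?_) ?_
  · ext v
    exact listDualRun_comm V v
  · intro V m
    apply Endofunctor.Coalgebra.Hom.ext
    have := listDualRun_unique V m.f (fun v => (ConcreteCategory.congr_hom m.h v).symm)
    ext v l
    exact congrFun (congrFun this v) l
end

section
/- Let C be a cartesian closed category, let R be an object of C, and let F, G be endofunctors of C. Suppose there is a natural isomorphism of functors Cᵒᵖ ⥤ C between α ↦ (G.obj α ⟹ R) and α ↦ F.obj (α ⟹ R). If (A, a : G.obj A ⟶ A) is an initial G-algebra and (C₀, c : C₀ ⟶ F.obj C₀) is a terminal F-coalgebra, then the objects A ⟹ R and C₀ are isomorphic in C. -/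
open CategoryTheory CategoryTheory.Limits Opposite MonoidalCategory CartesianClosed MonoidalClosed

section Aux

variable {C : Type*} [Category C] [CartesianMonoidalCategory C] [BraidedCategory C] [MonoidalClosed C] (R : C)

/-- Contravariant action of `(· ⟹ R)` on morphisms. -/
noncomputable def ihHm {X Y : C} (x : X ⟶ Y) : (Y ⟹ R) ⟶ (X ⟹ R) :=
  (MonoidalClosed.pre x).app R

/-- The self-adjointness transpose of `(· ⟹ R)`. -/
noncomputable def ihTau {X Y : C} (f : X ⟶ Y ⟹ R) : Y ⟶ X ⟹ R :=
  MonoidalClosed.curry ((β_ X Y).hom ≫ MonoidalClosed.uncurry f)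

lemma ihTau_tau {X Y : C} (f : X ⟶ Y ⟹ R) : ihTau R (ihTau R f) = f := by
  unfold ihTau
  rw [uncurry_curry, ← Category.assoc, SymmetricCategory.symmetry, Category.id_comp,
    curry_uncurry]

lemma ihTau_comp {X' X Y : C} (x : X' ⟶ X) (f : X ⟶ Y ⟹ R) :
    ihTau R (x ≫ f) = ihTau R f ≫ ihHm R x := by
  apply MonoidalClosed.uncurry_injective
  have hL : MonoidalClosed.uncurry (ihTau R (x ≫ f)) =
      (x ▷ Y) ≫ (β_ X Y).hom ≫ MonoidalClosed.uncurry f := by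
    rw [ihTau, uncurry_curry, uncurry_natural_left,
      ← BraidedCategory.braiding_naturality_left_assoc]
  have hR : MonoidalClosed.uncurry (ihTau R f ≫ ihHm R x) =
      (x ▷ Y) ≫ (β_ X Y).hom ≫ MonoidalClosed.uncurry f := by
    rw [ihHm, uncurry_natural_left, uncurry_pre, ← Category.assoc,
      whisker_exchange, Category.assoc, ← MonoidalClosed.uncurry_eq,
      ihTau, uncurry_curry]
  rw [hL, hR]

lemma ihTau_comp' {X Y Y' : C} (x : Y' ⟶ Y) (f : X ⟶ Y ⟹ R) :
    x ≫ ihTau R f = ihTau R (f ≫ ihHm R x) := by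
  have h := ihTau_comp R x (ihTau R f)
  rw [ihTau_tau] at h
  rw [← h, ihTau_tau]

lemma ihTau_id_comp_hm {X Y : C} (k : X ⟶ Y ⟹ R) :
    ihTau R (𝟙 (Y ⟹ R)) ≫ ihHm R k = ihTau R k := by
  rw [← ihTau_comp, Category.comp_id]

end Aux

/-- If `(G α ⟹ R)` is naturally isomorphic to `F (α ⟹ R)` (contravariantly in `α`),
the carrier `A` of an initial `G`-algebra gives `A ⟹ R` isomorphic to the carrier of a
terminal `F`-coalgebra: `(μα. Gα) ⟹ R ≅ να. Fα`. -/
theorem internalHom_initial_algebra_iso_terminal_coalgebra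
    {C : Type*} [Category C] [CartesianMonoidalCategory C] [MonoidalClosed C]
    (R : C) (F G : C ⥤ C)
    (η : G.op ⋙ CategoryTheory.MonoidalClosed.internalHom.flip.obj R ≅
         CategoryTheory.MonoidalClosed.internalHom.flip.obj R ⋙ F)
    (A : C) (a : G.obj A ⟶ A)
    (hA : Nonempty (IsInitial (Endofunctor.Algebra.mk A a : Endofunctor.Algebra G)))
    (C₀ : C) (c : C₀ ⟶ F.obj C₀)
    (hC : Nonempty (IsTerminal (Endofunctor.Coalgebra.mk C₀ c : Endofunctor.Coalgebra F))) :
    Nonempty (((CategoryTheory.MonoidalClosed.internalHom.flip.obj R).obj (op A)) ≅ C₀) := by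
  letI : BraidedCategory C := .ofCartesianMonoidalCategory
  obtain ⟨hA⟩ := hA
  obtain ⟨hC⟩ := hC
  -- components of η
  let e : ∀ X : C, ((G.obj X ⟹ R) ⟶ F.obj (X ⟹ R)) := fun X => η.hom.app (op X)
  let e' : ∀ X : C, (F.obj (X ⟹ R) ⟶ (G.obj X ⟹ R)) := fun X => η.inv.app (op X)
  have he : ∀ X : C, e X ≫ e' X = 𝟙 _ := fun X => η.hom_inv_id_app (op X)
  have he' : ∀ X : C, e' X ≫ e X = 𝟙 _ := fun X => η.inv_hom_id_app (op X)
  have hnat : ∀ {Y X : C} (x : Y ⟶ X),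
      ihHm R (G.map x) ≫ e Y = e X ≫ F.map (ihHm R x) := fun {Y X} x =>
    η.hom.naturality x.op
  have hnat' : ∀ {Y X : C} (x : Y ⟶ X),
      e' X ≫ ihHm R (G.map x) = F.map (ihHm R x) ≫ e' Y := by
    intro Y X x
    exact (η.inv.naturality x.op).symm
  -- the F-coalgebra on A ⟹ R
  set d : (A ⟹ R) ⟶ F.obj (A ⟹ R) := ihHm R a ≫ e A with hd
  let D : Endofunctor.Coalgebra F := ⟨A ⟹ R, d⟩
  let f₀h : D ⟶ (Endofunctor.Coalgebra.mk C₀ c) := hC.from D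
  let f₀ : (A ⟹ R) ⟶ C₀ := f₀h.f
  have hf₀ : d ≫ F.map f₀ = f₀ ≫ c := f₀h.h
  -- the G-algebra on C₀ ⟹ R
  let u : ∀ (Y : C), Y ⟶ (Y ⟹ R) ⟹ R := fun Y => ihTau R (𝟙 (Y ⟹ R))
  let sh : C₀ ⟶ (G.obj (C₀ ⟹ R) ⟹ R) := c ≫ F.map (u C₀) ≫ e' (C₀ ⟹ R)
  let s : G.obj (C₀ ⟹ R) ⟶ (C₀ ⟹ R) := ihTau R sh
  let S : Endofunctor.Algebra G := ⟨C₀ ⟹ R, s⟩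
  let gh : (Endofunctor.Algebra.mk A a) ⟶ S := hA.to S
  let gOne : A ⟶ (C₀ ⟹ R) := gh.f
  have hgOne : G.map gOne ≫ s = a ≫ gOne := gh.h
  let g : C₀ ⟶ (A ⟹ R) := ihTau R gOne
  -- g is a coalgebra morphism
  have hg : g ≫ d = c ≫ F.map g := by
    have h1 : g ≫ ihHm R a = ihTau R (a ≫ gOne) := by
      rw [ihTau_comp]
    have h2 : ihTau R (G.map gOne ≫ s) = ihTau R s ≫ ihHm R (G.map gOne) := ihTau_comp R _ _
    have h3 : ihTau R s = sh := ihTau_tau R sh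
    have h4 : u C₀ ≫ ihHm R gOne = g := ihTau_id_comp_hm R gOne
    rw [hd, ← Category.assoc, h1, ← hgOne, h2, h3]
    simp only [sh, Category.assoc]
    rw [reassoc_of% (hnat' gOne), he', Category.comp_id, ← F.map_comp, h4]
  let gcoalg : (Endofunctor.Coalgebra.mk C₀ c) ⟶ D := ⟨g, hg.symm⟩
  -- g ≫ f₀ = 𝟙 by terminality
  have hgf : g ≫ f₀ = 𝟙 C₀ := by
    have := hC.hom_ext (gcoalg ≫ f₀h) (𝟙 _)
    have := congrArg Endofunctor.Coalgebra.Hom.f this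
    simpa using this
  -- the G-algebra on (A ⟹ R) ⟹ R induced by the coalgebra D
  let sdh : (A ⟹ R) ⟶ (G.obj ((A ⟹ R) ⟹ R) ⟹ R) := d ≫ F.map (u (A ⟹ R)) ≫ e' _
  let sd : G.obj ((A ⟹ R) ⟹ R) ⟶ ((A ⟹ R) ⟹ R) := ihTau R sdh
  let Sd : Endofunctor.Algebra G := ⟨(A ⟹ R) ⟹ R, sd⟩
  -- u A : A ⟶ (A ⟹ R) ⟹ R is an algebra morphism (A, a) ⟶ Sd
  have huA : G.map (u A) ≫ sd = a ≫ u A := by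
    -- a ≫ u A = τ (ihHm a)
    have l1 : a ≫ u A = ihTau R (ihHm R a) := by
      rw [ihTau_comp' R a (𝟙 (A ⟹ R)), Category.id_comp]
    have l2 : G.map (u A) ≫ sd = ihTau R (sdh ≫ ihHm R (G.map (u A))) := by
      rw [← ihTau_comp' R (G.map (u A)) sdh]
    have l3 : sdh ≫ ihHm R (G.map (u A)) = ihHm R a := by
      have hu : u (A ⟹ R) ≫ ihHm R (u A) = 𝟙 (A ⟹ R) := by
        rw [ihTau_id_comp_hm]
        exact ihTau_tau R (𝟙 (A ⟹ R))
      simp only [sdh, Category.assoc]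
      rw [hnat' (u A), ← F.map_comp_assoc, hu, F.map_id, Category.id_comp, hd,
        Category.assoc, he, Category.comp_id]
    rw [l2, l3, l1]
  let uAh : (Endofunctor.Algebra.mk A a) ⟶ Sd := ⟨u A, huA⟩
  -- ihHm f₀ : (C₀ ⟹ R) ⟶ (A ⟹ R) ⟹ R is an algebra morphism S ⟶ Sd
  have hHf₀ : G.map (ihHm R f₀) ≫ sd = s ≫ ihHm R f₀ := by
    have r1 : s ≫ ihHm R f₀ = ihTau R (f₀ ≫ sh) := (ihTau_comp R f₀ sh).symm
    have r2 : G.map (ihHm R f₀) ≫ sd = ihTau R (sdh ≫ ihHm R (G.map (ihHm R f₀))) := by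
      rw [← ihTau_comp' R (G.map (ihHm R f₀)) sdh]
    have r3 : sdh ≫ ihHm R (G.map (ihHm R f₀)) = f₀ ≫ sh := by
      have hu : u (A ⟹ R) ≫ ihHm R (ihHm R f₀) = f₀ ≫ u C₀ := by
        rw [ihTau_id_comp_hm, ihTau_comp' R f₀ (𝟙 (C₀ ⟹ R)), Category.id_comp]
      simp only [sdh, sh, Category.assoc]
      rw [hnat' (ihHm R f₀), ← F.map_comp_assoc, hu, F.map_comp]
      simp only [Category.assoc]
      rw [reassoc_of% hf₀]
    rw [r2, r3, r1]
  let Hf₀h : S ⟶ Sd := ⟨ihHm R f₀, hHf₀⟩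
  -- f₀ ≫ g = 𝟙 by initiality
  have hfg : f₀ ≫ g = 𝟙 (A ⟹ R) := by
    have huniq : gh ≫ Hf₀h = uAh := hA.hom_ext _ _
    have huniq' : gOne ≫ ihHm R f₀ = u A := by
      have := congrArg Endofunctor.Algebra.Hom.f huniq
      simpa using this
    have : ihTau R (f₀ ≫ g) = ihTau R (𝟙 (A ⟹ R)) := by
      rw [ihTau_comp]
      show ihTau R (ihTau R gOne) ≫ ihHm R f₀ = _
      rw [ihTau_tau, huniq']
    have h2 := congrArg (ihTau R) this
    rwa [ihTau_tau, ihTau_tau] at h2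
  exact ⟨⟨f₀, g, hfg, hgf⟩⟩
end
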